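/- arXiv:2505.14198 — 3 statements merged into one kernel-verified Lean document; each statement's English description precedes it below -/
import Mathlib

section
/- Let A be a q×q complex matrix and let λ₁ be an eigenvalue of A of algebraic multiplicity 1, with u₁ a nonzero left eigenvector (u₁'A = λ₁u₁'). Then there exists a unique right eigenvector v₁ of A for λ₁ with u₁·v₁ = 1 (bilinear dot product, no conjugation), and the spectral projection for λ₁ is given by P_{λ₁} = v₁u₁'; equivalently, P_{λ₁}v = (u₁·v)v₁ for every vector v ∈ ℂ^q. -/
open Matrix
open Polynomial


lemma charpoly_sub_smul_one' {q : ℕ} (B : Matrix (Fin q) (Fin q) ℂ) (c : ℂ) :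
    (B - c • 1).charpoly = (B.charpoly).comp (X + C c) := by
  set φ : ℂ[X] →ₐ[ℂ] ℂ[X] := aeval (X + C c) with hφ
  have hcm : charmatrix (B - c • (1 : Matrix (Fin q) (Fin q) ℂ))
      = φ.toRingHom.mapMatrix (charmatrix B) := by
    ext i j
    by_cases h : i = j
    · subst h
      simp [hφ, charmatrix_apply_eq, Matrix.map_apply, Matrix.sub_apply, Matrix.smul_apply,
        Matrix.one_apply, map_sub, aeval_X, aeval_C]
      ring
    · simp [hφ, charmatrix_apply_ne _ _ _ h, Matrix.map_apply, aeval_C, Matrix.one_apply_ne h]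
  rw [Matrix.charpoly, hcm, ← RingHom.map_det, Polynomial.comp_eq_aeval]
  rfl

lemma charpoly_toLinAlgEquiv' {q : ℕ} (B : Matrix (Fin q) (Fin q) ℂ) :
    (Matrix.toLinAlgEquiv' B).charpoly = B.charpoly := by
  rw [← LinearMap.charpoly_toMatrix _ (Pi.basisFun ℂ (Fin q))]
  congr 1
  exact LinearMap.toMatrixAlgEquiv'_toLinAlgEquiv' B

/-- `P` is the spectral projection of `A` for the eigenvalue `lam`: it is the identity
on the generalized eigenspace E_lam = ker((A − lam I)^q) and vanishes on the generalized
eigenspace E_mu = ker((A − mu I)^q) of every other eigenvalue `mu`. Since ℂ^q is the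
direct sum of the generalized eigenspaces, these conditions determine `P` uniquely. -/
def IsSpectralProj {q : ℕ} (A : Matrix (Fin q) (Fin q) ℂ) (lam : ℂ)
    (P : Matrix (Fin q) (Fin q) ℂ) : Prop :=
  (∀ v : Fin q → ℂ, ((A - lam • 1) ^ q).mulVec v = 0 → P.mulVec v = v) ∧
  ∀ mu : ℂ, mu ≠ lam → ∀ v : Fin q → ℂ, ((A - mu • 1) ^ q).mulVec v = 0 → P.mulVec v = 0

/-- Let A be a q×q complex matrix and λ₁ an eigenvalue of A of algebraic
multiplicity 1, with u₁ a nonzero left eigenvector (u₁'A = λ₁u₁'). Then there exists a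
unique right eigenvector v₁ of A for λ₁ with u₁·v₁ = 1 (bilinear dot product), and the
spectral projection for λ₁ is P_{λ₁} = v₁u₁'; equivalently P_{λ₁}v = (u₁·v)v₁ for all v. -/
theorem spectral_projection_of_simple_eigenvalue (q : ℕ) (hq : 1 ≤ q)
    (A : Matrix (Fin q) (Fin q) ℂ) (lam : ℂ)
    (hmult : Polynomial.rootMultiplicity lam (Matrix.charpoly A) = 1)
    (u : Fin q → ℂ) (hu : u ≠ 0) (hleft : Matrix.vecMul u A = lam • u)
    (P : Matrix (Fin q) (Fin q) ℂ) (hP : IsSpectralProj A lam P) :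
    (∃! v : Fin q → ℂ, A.mulVec v = lam • v ∧ u ⬝ᵥ v = 1) ∧
      ∀ v : Fin q → ℂ, A.mulVec v = lam • v → u ⬝ᵥ v = 1 →
        P = Matrix.vecMulVec v u ∧ ∀ x : Fin q → ℂ, P.mulVec x = (u ⬝ᵥ x) • v := by
  obtain ⟨hP1, hP2⟩ := hP
  set f : Module.End ℂ (Fin q → ℂ) := Matrix.toLinAlgEquiv' A with hf
  -- matrix powers vs endomorphism powers
  have hB1 : ∀ (c : ℂ) (k : ℕ) (x : Fin q → ℂ),
      ((f - c • 1) ^ k) x = ((A - c • 1) ^ k).mulVec x := by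
    intro c k x
    have h : Matrix.toLinAlgEquiv' ((A - c • 1) ^ k) = (f - c • 1) ^ k := by
      rw [map_pow, map_sub, _root_.map_smul, _root_.map_one]
    rw [← h, Matrix.toLinAlgEquiv'_apply]
  -- the dot-product functional
  have hdot1 : ∀ (c : ℂ) (x : Fin q → ℂ), u ⬝ᵥ ((f - c • 1) x) = (lam - c) * (u ⬝ᵥ x) := by
    intro c x
    have hfx : (f - c • 1) x = A.mulVec x - c • x := by
      simp [hf, Matrix.toLinAlgEquiv'_apply]
    rw [hfx, dotProduct_sub, Matrix.dotProduct_mulVec, hleft, dotProduct_smul, smul_dotProduct]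
    simp [smul_eq_mul]
    ring
  have hdotk : ∀ (c : ℂ) (k : ℕ) (x : Fin q → ℂ),
      u ⬝ᵥ (((f - c • 1) ^ k) x) = (lam - c) ^ k * (u ⬝ᵥ x) := by
    intro c k
    induction k with
    | zero => intro x; simp
    | succ n ih =>
      intro x
      rw [pow_succ, Module.End.mul_apply, ih, hdot1, pow_succ]
      ring
  have hdot : ∀ (c : ℂ), c ≠ lam → ∀ (k : ℕ) (x : Fin q → ℂ),
      ((f - c • 1) ^ k) x = 0 → u ⬝ᵥ x = 0 := by
    intro c hc k x hx
    have h := hdotk c k x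
    rw [hx, dotProduct_zero] at h
    have hlc : (lam - c) ^ k ≠ 0 := pow_ne_zero _ (sub_ne_zero.mpr (Ne.symm hc))
    rcases mul_eq_zero.mp h.symm with h' | h'
    · exact absurd h' hlc
    · exact h'
  -- membership in the generalized eigenspaces, matrix form
  have hmem : ∀ (c : ℂ) (x : Fin q → ℂ),
      x ∈ f.maxGenEigenspace c ↔ ((A - c • 1) ^ q).mulVec x = 0 := by
    intro c x
    constructor
    · intro hx
      rw [Module.End.maxGenEigenspace_eq_genEigenspace_finrank] at hx
      rw [Module.End.genEigenspace_nat, LinearMap.mem_ker] at hx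
      rw [← hB1]
      rw [Module.finrank_fin_fun ℂ] at hx
      exact hx
    · intro hx
      rw [Module.End.mem_maxGenEigenspace]
      exact ⟨q, by rw [hB1]; exact hx⟩
  -- the generalized eigenspace for lam has dimension 1
  set E := f.maxGenEigenspace lam with hE
  have hEdim : Module.finrank ℂ E = 1 := by
    set g : Module.End ℂ (Fin q → ℂ) := f - lam • 1 with hg
    have h0 : g.maxGenEigenspace 0 = E := by
      ext x
      simp [hg, hE, Module.End.mem_maxGenEigenspace]
    have hgc : g.charpoly = A.charpoly.comp (X + C lam) := by
      have h2 : g = Matrix.toLinAlgEquiv' (A - lam • 1) := by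
        rw [hg, hf, map_sub, _root_.map_smul, _root_.map_one]
      rw [h2, charpoly_toLinAlgEquiv', charpoly_sub_smul_one']
    have h3 := g.finrank_maxGenEigenspace_zero_eq
    rw [h0, hgc, ← Polynomial.rootMultiplicity_eq_natTrailingDegree, hmult] at h3
    exact h3
  -- elements of E
  have hEne : ∃ w : Fin q → ℂ, w ∈ E ∧ w ≠ 0 := by
    by_contra h
    push_neg at h
    have : E = ⊥ := by
      rw [Submodule.eq_bot_iff]
      intro x hx
      by_contra hx0
      exact hx0 (by by_contra hx1; exact hx1 (h x hx ▸ rfl))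
    rw [this] at hEdim
    simp at hEdim
  obtain ⟨w, hwE, hwne⟩ := hEne
  have hspan : ∀ y : Fin q → ℂ, y ∈ E → y ≠ 0 → E = Submodule.span ℂ {y} := by
    intro y hy hyne
    refine (Submodule.eq_of_le_of_finrank_le ?_ ?_).symm
    · rw [Submodule.span_le, Set.singleton_subset_iff]; exact hy
    · rw [hEdim, finrank_span_singleton hyne]
  -- w is an eigenvector
  have heig : A.mulVec w = lam • w := by
    have hwmem : (f - lam • 1) w ∈ E := by
      obtain ⟨k, hk⟩ := (Module.End.mem_maxGenEigenspace f lam w).mp hwE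
      rw [Module.End.mem_maxGenEigenspace]
      refine ⟨k, ?_⟩
      rw [← Module.End.mul_apply, ← pow_succ, pow_succ', Module.End.mul_apply, hk, map_zero]
    rw [hspan w hwE hwne, Submodule.mem_span_singleton] at hwmem
    obtain ⟨c, hc⟩ := hwmem
    have hck : ∀ m : ℕ, ((f - lam • 1) ^ m) w = c ^ m • w := by
      intro m
      induction m with
      | zero => simp
      | succ n ih =>
        rw [pow_succ, Module.End.mul_apply, ← hc, LinearMap.map_smul, ih, smul_smul,
          ← pow_succ']
    obtain ⟨k, hk⟩ := (Module.End.mem_maxGenEigenspace f lam w).mp hwE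
    rw [hck k] at hk
    have hc0 : c = 0 := by
      rcases smul_eq_zero.mp hk with h' | h'
      · exact (pow_eq_zero_iff'.mp h').1
      · exact absurd h' hwne
    have : (f - lam • 1) w = 0 := by rw [← hc, hc0, zero_smul]
    have h4 : f w - lam • w = 0 := by
      rw [← this]; simp
    have h5 : f w = A.mulVec w := by rw [hf]; exact Matrix.toLinAlgEquiv'_apply A w
    rw [h5] at h4
    exact sub_eq_zero.mp h4
  -- the dot-product linear functional
  set ℓ : (Fin q → ℂ) →ₗ[ℂ] ℂ :=
    { toFun := fun x => u ⬝ᵥ x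
      map_add' := fun x y => dotProduct_add u x y
      map_smul' := fun c x => by simp [dotProduct_smul, smul_eq_mul] } with hℓ
  -- u is not orthogonal to w
  have huw : u ⬝ᵥ w ≠ 0 := by
    intro h0
    have htop : ∀ μ : ℂ, f.maxGenEigenspace μ ≤ LinearMap.ker ℓ := by
      intro μ x hx
      rw [LinearMap.mem_ker]
      by_cases hμ : μ = lam
      · subst hμ
        have hx' : x ∈ E := hx
        rw [hspan w hwE hwne, Submodule.mem_span_singleton] at hx'
        obtain ⟨c, hc⟩ := hx'
        simp [hℓ, ← hc, dotProduct_smul, h0]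
      · obtain ⟨k, hk⟩ := (Module.End.mem_maxGenEigenspace f μ x).mp hx
        exact hdot μ hμ k x hk
    have hker : LinearMap.ker ℓ = ⊤ :=
      top_unique ((Module.End.iSup_maxGenEigenspace_eq_top f) ▸ iSup_le htop)
    apply hu
    funext j
    have : ℓ (Pi.single j 1) = 0 := by
      rw [← LinearMap.mem_ker, hker]; trivial
    simpa [hℓ, dotProduct_single] using this
  -- existence and uniqueness of v₁
  set v₁ : Fin q → ℂ := (u ⬝ᵥ w)⁻¹ • w with hv₁
  have hv₁eig : A.mulVec v₁ = lam • v₁ := by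
    simp only [hv₁, Matrix.mulVec_smul, heig]
    rw [smul_comm]
  have hv₁dot : u ⬝ᵥ v₁ = 1 := by
    rw [hv₁, dotProduct_smul, smul_eq_mul, inv_mul_cancel₀ huw]
  have huniq : ∀ y : Fin q → ℂ, A.mulVec y = lam • y → u ⬝ᵥ y = 1 → y = v₁ := by
    intro y hy hydot
    have hyE : y ∈ E := by
      rw [Module.End.mem_maxGenEigenspace]
      refine ⟨1, ?_⟩
      rw [pow_one]
      have : f y = A.mulVec y := Matrix.toLinAlgEquiv'_apply A y
      simp [this, hy]
    rw [hspan w hwE hwne, Submodule.mem_span_singleton] at hyE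
    obtain ⟨c, hc⟩ := hyE
    rw [← hc, dotProduct_smul, smul_eq_mul] at hydot
    have : c = (u ⬝ᵥ w)⁻¹ := by field_simp at hydot ⊢; linear_combination hydot
    rw [← hc, this, hv₁]
  refine ⟨⟨v₁, ⟨hv₁eig, hv₁dot⟩, fun y hy => huniq y hy.1 hy.2⟩, ?_⟩
  -- part 2
  intro v hveig hvdot
  have hvne : v ≠ 0 := by
    intro h; rw [h, dotProduct_zero] at hvdot; exact zero_ne_one hvdot
  have hvE : v ∈ E := by
    rw [Module.End.mem_maxGenEigenspace]
    refine ⟨1, ?_⟩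
    rw [pow_one]
    have : f v = A.mulVec v := Matrix.toLinAlgEquiv'_apply A v
    simp [this, hveig]
  have hPx : ∀ x : Fin q → ℂ, P.mulVec x = (u ⬝ᵥ x) • v := by
    have htop : ∀ μ : ℂ, f.maxGenEigenspace μ ≤
        LinearMap.ker (P.mulVecLin - ℓ.smulRight v) := by
      intro μ x hx
      rw [LinearMap.mem_ker, LinearMap.sub_apply, LinearMap.smulRight_apply,
        Matrix.mulVecLin_apply, sub_eq_zero]
      by_cases hμ : μ = lam
      · subst hμ
        have hPxx : P.mulVec x = x := hP1 x ((hmem μ x).mp hx)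
        have hxE : x ∈ E := hx
        rw [hspan v hvE hvne, Submodule.mem_span_singleton] at hxE
        obtain ⟨c, hc⟩ := hxE
        rw [hPxx, ← hc]
        simp [hℓ, dotProduct_smul, hvdot, smul_eq_mul]
      · have hPxx : P.mulVec x = 0 := hP2 μ hμ x ((hmem μ x).mp hx)
        obtain ⟨k, hk⟩ := (Module.End.mem_maxGenEigenspace f μ x).mp hx
        have := hdot μ hμ k x hk
        simp [hPxx, hℓ, this]
    have hker : LinearMap.ker (P.mulVecLin - ℓ.smulRight v) = ⊤ :=
      top_unique ((Module.End.iSup_maxGenEigenspace_eq_top f) ▸ iSup_le htop)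
    intro x
    have hx : x ∈ LinearMap.ker (P.mulVecLin - ℓ.smulRight v) := by rw [hker]; trivial
    rw [LinearMap.mem_ker, LinearMap.sub_apply, LinearMap.smulRight_apply,
      Matrix.mulVecLin_apply, sub_eq_zero] at hx
    exact hx
  refine ⟨?_, hPx⟩
  ext i j
  have h := congrFun (hPx (Pi.single j 1)) i
  rw [Matrix.mulVec_single] at h
  simp only [Pi.smul_apply, Matrix.col_apply, op_smul_eq_mul, mul_one] at h
  rw [h, Matrix.vecMulVec_apply]
  simp [dotProduct_single, mul_comm]
end

section
/- Let λ ∈ ℂ, w₀ > 0, b > 0, and w_k := w₀ + kb. There is a constant C (depending on λ, b, w₀ but not on i, j) such that for all integers 1 ≤ i ≤ j with w_i ≥ 2|λ|: |∏_{k=i}^{j−1}(1 + λ/w_k)| ≤ C (j/i)^{Re λ / b}. -/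
open Finset

lemma abs_one_add_le (z : ℂ) :
    ‖1 + z‖ ≤ Real.exp (z.re + ‖z‖ ^ 2 / 2) := by
  have h1 : (‖1 + z‖) ^ 2 = 1 + 2 * z.re + ‖z‖ ^ 2 := by
    rw [Complex.sq_norm, Complex.sq_norm]
    simp [Complex.normSq_apply]
    ring
  have h2 : 1 + (2 * z.re + ‖z‖ ^ 2) ≤ Real.exp (2 * z.re + ‖z‖ ^ 2) := by
    linarith [Real.add_one_le_exp (2 * z.re + ‖z‖ ^ 2)]
  have h3 : Real.exp (z.re + ‖z‖ ^ 2 / 2) ^ 2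
      = Real.exp (2 * z.re + ‖z‖ ^ 2) := by
    rw [sq, ← Real.exp_add]; ring_nf
  have h4 : (‖1 + z‖) ^ 2 ≤ Real.exp (z.re + ‖z‖ ^ 2 / 2) ^ 2 := by
    rw [h1, h3]; linarith
  nlinarith [norm_nonneg (1 + z), Real.exp_pos (z.re + ‖z‖ ^ 2 / 2)]

lemma sum_inv_le (w₀ b : ℝ) (hw₀ : 0 < w₀) (hb : 0 < b) (i : ℕ) (hi : 1 ≤ i) :
    ∀ j, i ≤ j → ∑ k ∈ Ico i j, 1 / (w₀ + (k : ℝ) * b)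
      ≤ (1 / b) * Real.log ((w₀ + (j : ℝ) * b - b) / (w₀ + (i : ℝ) * b - b)) := by
  have hi' : (1 : ℝ) ≤ (i : ℝ) := by exact_mod_cast hi
  have hBi : (0 : ℝ) < w₀ + (i : ℝ) * b - b := by nlinarith
  intro j hj
  induction j, hj using Nat.le_induction with
  | base => simp [div_self hBi.ne', Real.log_one]
  | succ j hj ih =>
    have hj' : (1 : ℝ) ≤ (j : ℝ) := by exact_mod_cast hi.trans hj
    have hA : (0 : ℝ) < w₀ + (j : ℝ) * b - b := by nlinarith
    have hA' : (0 : ℝ) < w₀ + (j : ℝ) * b := by nlinarith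
    rw [Finset.sum_Ico_succ_top hj]
    have hcast : (w₀ + ((j : ℝ) + 1) * b - b) = w₀ + (j : ℝ) * b := by ring
    push_cast
    rw [hcast]
    have hlog : Real.log ((w₀ + (j : ℝ) * b - b) / (w₀ + (j : ℝ) * b))
        ≤ (w₀ + (j : ℝ) * b - b) / (w₀ + (j : ℝ) * b) - 1 :=
      Real.log_le_sub_one_of_pos (by positivity)
    rw [Real.log_div hA.ne' hBi.ne', Real.log_div hA'.ne' hBi.ne'] at *
    have hd : (w₀ + (j : ℝ) * b - b) / (w₀ + (j : ℝ) * b) - 1 = -(b / (w₀ + (j : ℝ) * b)) := by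
      field_simp; ring
    rw [hd] at hlog
    have key : 1 / (w₀ + (j : ℝ) * b)
        ≤ (1 / b) * (Real.log (w₀ + (j : ℝ) * b) - Real.log (w₀ + (j : ℝ) * b - b)) := by
      rw [Real.log_div hA.ne' hA'.ne'] at hlog
      have : (1 / b) * (b / (w₀ + (j : ℝ) * b))
          ≤ (1 / b) * (Real.log (w₀ + (j : ℝ) * b) - Real.log (w₀ + (j : ℝ) * b - b)) := by
        apply mul_le_mul_of_nonneg_left _ (by positivity)
        linarith
      have he : (1 / b) * (b / (w₀ + (j : ℝ) * b)) = 1 / (w₀ + (j : ℝ) * b) := by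
        field_simp
      linarith
    linarith

lemma le_sum_inv (w₀ b : ℝ) (hw₀ : 0 < w₀) (hb : 0 < b) (i : ℕ) (hi : 1 ≤ i) :
    ∀ j, i ≤ j → (1 / b) * Real.log ((w₀ + (j : ℝ) * b) / (w₀ + (i : ℝ) * b))
      ≤ ∑ k ∈ Ico i j, 1 / (w₀ + (k : ℝ) * b) := by
  have hBi : (0 : ℝ) < w₀ + (i : ℝ) * b := by positivity
  intro j hj
  induction j, hj using Nat.le_induction with
  | base => simp [div_self hBi.ne', Real.log_one]
  | succ j hj ih =>
    have hA' : (0 : ℝ) < w₀ + (j : ℝ) * b := by positivity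
    have hA'' : (0 : ℝ) < w₀ + ((j : ℝ) + 1) * b := by positivity
    rw [Finset.sum_Ico_succ_top hj]
    push_cast
    have hlog : Real.log ((w₀ + ((j : ℝ) + 1) * b) / (w₀ + (j : ℝ) * b))
        ≤ (w₀ + ((j : ℝ) + 1) * b) / (w₀ + (j : ℝ) * b) - 1 :=
      Real.log_le_sub_one_of_pos (by positivity)
    have hd : (w₀ + ((j : ℝ) + 1) * b) / (w₀ + (j : ℝ) * b) - 1 = b / (w₀ + (j : ℝ) * b) := by
      field_simp; ring
    rw [hd] at hlog
    rw [Real.log_div hA'.ne' hBi.ne'] at ih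
    rw [Real.log_div hA''.ne' hBi.ne']
    have key : (1 / b) * (Real.log (w₀ + ((j : ℝ) + 1) * b) - Real.log (w₀ + (j : ℝ) * b))
        ≤ 1 / (w₀ + (j : ℝ) * b) := by
      rw [← Real.log_div hA''.ne' hA'.ne']
      have : (1 / b) * Real.log ((w₀ + ((j : ℝ) + 1) * b) / (w₀ + (j : ℝ) * b))
          ≤ (1 / b) * (b / (w₀ + (j : ℝ) * b)) :=
        mul_le_mul_of_nonneg_left hlog (by positivity)
      have he : (1 / b) * (b / (w₀ + (j : ℝ) * b)) = 1 / (w₀ + (j : ℝ) * b) := by field_simp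
      linarith
    rw [← Real.log_div hA''.ne' hA'.ne'] at key
    have : Real.log (w₀ + ((j:ℝ)+1)*b) - Real.log (w₀ + (i:ℝ)*b)
        = (Real.log (w₀ + (j:ℝ)*b) - Real.log (w₀ + (i:ℝ)*b))
          + Real.log ((w₀ + ((j : ℝ) + 1) * b) / (w₀ + (j : ℝ) * b)) := by
      rw [Real.log_div hA''.ne' hA'.ne']; ring
    rw [this, mul_add]
    linarith

lemma sum_inv_sq_le (w₀ b : ℝ) (hw₀ : 0 < w₀) (hb : 0 < b) (i : ℕ) (hi : 1 ≤ i) :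
    ∀ j, i ≤ j → ∑ k ∈ Ico i j, 1 / (w₀ + (k : ℝ) * b) ^ 2 ≤ 1 / (b * w₀) := by
  have hi' : (1 : ℝ) ≤ (i : ℝ) := by exact_mod_cast hi
  have hBi : (0 : ℝ) < w₀ + (i : ℝ) * b - b := by nlinarith
  suffices h : ∀ j, i ≤ j → ∑ k ∈ Ico i j, 1 / (w₀ + (k : ℝ) * b) ^ 2
      ≤ (1 / b) * (1 / (w₀ + (i : ℝ) * b - b) - 1 / (w₀ + (j : ℝ) * b - b)) by
    intro j hj
    refine (h j hj).trans ?_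
    have hj' : (1 : ℝ) ≤ (j : ℝ) := by exact_mod_cast hi.trans hj
    have hAj : (0 : ℝ) < w₀ + (j : ℝ) * b - b := by nlinarith
    have h1 : 1 / (w₀ + (i : ℝ) * b - b) ≤ 1 / w₀ := by
      apply one_div_le_one_div_of_le hw₀; nlinarith
    have h2 : (0:ℝ) ≤ 1 / (w₀ + (j : ℝ) * b - b) := by positivity
    have : (1 / b) * (1 / (w₀ + (i : ℝ) * b - b) - 1 / (w₀ + (j : ℝ) * b - b))
        ≤ (1 / b) * (1 / w₀) := by
      apply mul_le_mul_of_nonneg_left _ (by positivity)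
      linarith
    calc _ ≤ (1/b) * (1/w₀) := this
    _ = 1 / (b * w₀) := by field_simp
  intro j hj
  induction j, hj using Nat.le_induction with
  | base => simp
  | succ j hj ih =>
    have hj' : (1 : ℝ) ≤ (j : ℝ) := by exact_mod_cast hi.trans hj
    have hA : (0 : ℝ) < w₀ + (j : ℝ) * b - b := by nlinarith
    have hA' : (0 : ℝ) < w₀ + (j : ℝ) * b := by positivity
    rw [Finset.sum_Ico_succ_top hj]
    push_cast
    have hcast : (w₀ + ((j : ℝ) + 1) * b - b) = w₀ + (j : ℝ) * b := by ring
    rw [hcast]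
    have key : 1 / (w₀ + (j : ℝ) * b) ^ 2
        ≤ (1 / b) * (1 / (w₀ + (j : ℝ) * b - b) - 1 / (w₀ + (j : ℝ) * b)) := by
      have heq : (1 / b) * (1 / (w₀ + (j : ℝ) * b - b) - 1 / (w₀ + (j : ℝ) * b))
          = 1 / ((w₀ + (j : ℝ) * b - b) * (w₀ + (j : ℝ) * b)) := by
        field_simp; rw [div_sub_one (by rw [mul_comm]; exact hA.ne')]; ring
      rw [heq]
      apply one_div_le_one_div_of_le (by positivity)
      nlinarith
    linarith

lemma logU_cmp (w₀ b : ℝ) (hw₀ : 0 < w₀) (hb : 0 < b) (x y : ℝ) (hx : 1 ≤ x) (hxy : x ≤ y) :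
    Real.log ((w₀ + y * b - b) / (w₀ + x * b - b))
      ≤ Real.log (y / x) + Real.log ((w₀ + b) / min w₀ b) := by
  have hm0 : 0 < min w₀ b := lt_min hw₀ hb
  have hy : 1 ≤ y := hx.trans hxy
  have hAy : 0 < w₀ + y * b - b := by nlinarith
  have hAx : 0 < w₀ + x * b - b := by nlinarith
  have hr : (w₀ + y * b - b) / (w₀ + x * b - b) ≤ ((w₀ + b) * y) / (min w₀ b * x) := by
    have hn : w₀ + y * b - b ≤ (w₀ + b) * y := by nlinarith
    have hd : min w₀ b * x ≤ w₀ + x * b - b := by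
      have h1 : min w₀ b ≤ w₀ := min_le_left _ _
      have h2 : min w₀ b ≤ b := min_le_right _ _
      nlinarith
    exact div_le_div₀ (by positivity) hn (by positivity) hd
  refine (Real.log_le_log (by positivity) hr).trans ?_
  have : ((w₀ + b) * y) / (min w₀ b * x) = ((w₀ + b) / min w₀ b) * (y / x) := by
    field_simp
  rw [this, Real.log_mul (by positivity) (by positivity)]
  linarith

lemma logL_cmp (w₀ b : ℝ) (hw₀ : 0 < w₀) (hb : 0 < b) (x y : ℝ) (hx : 1 ≤ x) (hxy : x ≤ y) :
    Real.log (y / x) - Real.log ((w₀ + b) / b)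
      ≤ Real.log ((w₀ + y * b) / (w₀ + x * b)) := by
  have hy : 1 ≤ y := hx.trans hxy
  have hr : (b / (w₀ + b)) * (y / x) ≤ (w₀ + y * b) / (w₀ + x * b) := by
    have heq : (b / (w₀ + b)) * (y / x) = (b * y) / ((w₀ + b) * x) := by
      field_simp
    rw [heq]
    have hn : b * y ≤ w₀ + y * b := by nlinarith
    have hd : w₀ + x * b ≤ (w₀ + b) * x := by nlinarith
    exact div_le_div₀ (by positivity) hn (by positivity) hd
  refine le_trans ?_ (Real.log_le_log (by positivity) hr)
  rw [Real.log_mul (by positivity) (by positivity)]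
  have : Real.log (b / (w₀ + b)) = -Real.log ((w₀ + b) / b) := by
    rw [← Real.log_inv]
    congr 1
    field_simp
  rw [this]
  linarith


/-- Let λ ∈ ℂ, w₀ > 0, b > 0 and w_k := w₀ + kb. There is a constant `C`
(depending on λ, b, w₀ but not on i, j) such that for all integers 1 ≤ i ≤ j with
w_i ≥ 2|λ|:  |∏_{k=i}^{j−1} (1 + λ/w_k)| ≤ C (j/i)^{Re λ / b}. -/
theorem abs_prod_one_add_div_le (lam : ℂ) (w₀ b : ℝ) (hw₀ : 0 < w₀) (hb : 0 < b) :
    ∃ C : ℝ, ∀ i j : ℕ, 1 ≤ i → i ≤ j → 2 * ‖lam‖ ≤ w₀ + (i : ℝ) * b →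
      ‖∏ k ∈ Finset.Ico i j, (1 + lam / ((w₀ + (k : ℝ) * b : ℝ) : ℂ))‖
        ≤ C * ((j : ℝ) / (i : ℝ)) ^ (lam.re / b) := by
  set m : ℝ := min w₀ b with hm
  have hm0 : 0 < m := lt_min hw₀ hb
  set KU : ℝ := Real.log ((w₀ + b) / m) with hKU
  set KL : ℝ := Real.log ((w₀ + b) / b) with hKL
  have hKU0 : 0 ≤ KU := Real.log_nonneg (by
    rw [le_div_iff₀ hm0]; have := min_le_left w₀ b; linarith)
  have hKL0 : 0 ≤ KL := Real.log_nonneg (by rw [le_div_iff₀ hb]; linarith)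
  refine ⟨Real.exp (|lam.re| / b * max KU KL + (‖lam‖) ^ 2 / (2 * b * w₀)), ?_⟩
  intro i j hi hij _
  have hi' : (1 : ℝ) ≤ (i : ℝ) := by exact_mod_cast hi
  have hj' : (1 : ℝ) ≤ (j : ℝ) := by exact_mod_cast hi.trans hij
  have hij' : (i : ℝ) ≤ (j : ℝ) := by exact_mod_cast hij
  have hi0 : (0 : ℝ) < (i : ℝ) := by linarith
  have hj0 : (0 : ℝ) < (j : ℝ) := by linarith
  set L : ℝ := Real.log ((j : ℝ) / (i : ℝ)) with hL
  set S1 : ℝ := ∑ k ∈ Finset.Ico i j, 1 / (w₀ + (k : ℝ) * b) with hS1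
  set S2 : ℝ := ∑ k ∈ Finset.Ico i j, 1 / (w₀ + (k : ℝ) * b) ^ 2 with hS2
  -- step 1: bound the product by exp of a sum
  have hprod : ‖∏ k ∈ Finset.Ico i j, (1 + lam / ((w₀ + (k : ℝ) * b : ℝ) : ℂ))‖
      ≤ Real.exp (lam.re * S1 + (‖lam‖) ^ 2 / 2 * S2) := by
    rw [norm_prod]
    have hsplit : lam.re * S1 + (‖lam‖) ^ 2 / 2 * S2
        = ∑ k ∈ Finset.Ico i j, (lam.re * (1 / (w₀ + (k : ℝ) * b))
            + (‖lam‖) ^ 2 / 2 * (1 / (w₀ + (k : ℝ) * b) ^ 2)) := by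
      rw [Finset.sum_add_distrib, ← Finset.mul_sum, ← Finset.mul_sum]
    rw [hsplit, Real.exp_sum]
    apply Finset.prod_le_prod (fun k _ => norm_nonneg _)
    intro k _
    have hwk : (0 : ℝ) < w₀ + (k : ℝ) * b := by positivity
    refine (abs_one_add_le (lam / ((w₀ + (k : ℝ) * b : ℝ) : ℂ))).trans_eq ?_
    congr 1
    rw [Complex.div_ofReal_re, norm_div, Complex.norm_real, Real.norm_eq_abs, abs_of_pos hwk]
    field_simp
  -- log comparison, upper
  have hAj : (0 : ℝ) < w₀ + (j : ℝ) * b - b := by nlinarith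
  have hAi : (0 : ℝ) < w₀ + (i : ℝ) * b - b := by nlinarith
  have hlogU : Real.log ((w₀ + (j : ℝ) * b - b) / (w₀ + (i : ℝ) * b - b)) ≤ L + KU :=
    logU_cmp w₀ b hw₀ hb (i : ℝ) (j : ℝ) hi' hij' 
  -- log comparison, lower
  have hlogL : L - KL ≤ Real.log ((w₀ + (j : ℝ) * b) / (w₀ + (i : ℝ) * b)) :=
    logL_cmp w₀ b hw₀ hb (i : ℝ) (j : ℝ) hi' hij' 
  -- bound lam.re * S1
  have h1 : lam.re * S1 ≤ lam.re / b * L + |lam.re| / b * max KU KL := by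
    rcases le_or_gt 0 lam.re with hpos | hneg
    · have hSU : S1 ≤ (1 / b) * (L + KU) := by
        refine (sum_inv_le w₀ b hw₀ hb i hi j hij).trans ?_
        apply mul_le_mul_of_nonneg_left hlogU (by positivity)
      have : lam.re * S1 ≤ lam.re * ((1 / b) * (L + KU)) :=
        mul_le_mul_of_nonneg_left hSU hpos
      have heq : lam.re * ((1 / b) * (L + KU)) = lam.re / b * L + lam.re / b * KU := by ring
      have hle : lam.re / b * KU ≤ |lam.re| / b * max KU KL := by
        gcongr
        · exact le_abs_self _
        · exact le_max_left _ _
      linarith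
    · have hSL : (1 / b) * (L - KL) ≤ S1 := by
        refine le_trans ?_ (le_sum_inv w₀ b hw₀ hb i hi j hij)
        apply mul_le_mul_of_nonneg_left hlogL (by positivity)
      have : lam.re * S1 ≤ lam.re * ((1 / b) * (L - KL)) := by
        apply mul_le_mul_of_nonpos_left hSL hneg.le
      have heq : lam.re * ((1 / b) * (L - KL)) = lam.re / b * L + (-lam.re) / b * KL := by ring
      have hle : (-lam.re) / b * KL ≤ |lam.re| / b * max KU KL := by
        gcongr
        · rw [abs_of_neg hneg]
        · exact le_max_right _ _
      linarith
  -- bound S2 part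
  have h2 : (‖lam‖) ^ 2 / 2 * S2 ≤ (‖lam‖) ^ 2 / (2 * b * w₀) := by
    have hS2le : S2 ≤ 1 / (b * w₀) := sum_inv_sq_le w₀ b hw₀ hb i hi j hij
    have : (‖lam‖) ^ 2 / 2 * S2 ≤ (‖lam‖) ^ 2 / 2 * (1 / (b * w₀)) := by
      apply mul_le_mul_of_nonneg_left hS2le (by positivity)
    calc (‖lam‖) ^ 2 / 2 * S2 ≤ (‖lam‖) ^ 2 / 2 * (1 / (b * w₀)) := this
      _ = (‖lam‖) ^ 2 / (2 * b * w₀) := by ring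
  -- combine
  have hrpow : ((j : ℝ) / (i : ℝ)) ^ (lam.re / b) = Real.exp (lam.re / b * L) := by
    rw [Real.rpow_def_of_pos (by positivity), hL]; ring_nf
  rw [hrpow, ← Real.exp_add]
  refine hprod.trans (Real.exp_le_exp.mpr ?_)
  linarith
end

section
/- Let N be a nilpotent q×q complex matrix with N^{ν+1} = 0 for an integer ν ≥ 0, let λ ∈ ℂ, w₀ > 0, b > 0, and w_k := w₀ + kb. There is a constant C (depending on N, ν, λ, b, w₀ but not on i, j) such that for all integers 1 ≤ i ≤ j with w_i ≥ 2|λ|: ‖∏_{k=i}^{j−1}(I + (w_k + λ)⁻¹ N)‖ ≤ C (1 + log(j/i))^{ν}. -/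
/-- The operator norm of a complex q×q matrix, with respect to the Euclidean norm. -/
noncomputable def opNorm {q : ℕ} (M : Matrix (Fin q) (Fin q) ℂ) : ℝ :=
  ‖Matrix.toEuclideanCLM (𝕜 := ℂ) M‖

/-- Expansion of a product of `1 + c • N` with `N` nilpotent, with coefficient bounds. -/
lemma aux_prod_one_add_smul {q ν : ℕ} (N : Matrix (Fin q) (Fin q) ℂ) (hN : N ^ (ν + 1) = 0) :
    ∀ l : List ℂ, ∃ a : ℕ → ℂ,
      (l.map fun c => (1 : Matrix (Fin q) (Fin q) ℂ) + c • N).prod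
        = ∑ m ∈ Finset.range (ν + 1), a m • N ^ m
      ∧ ∀ m, ‖a m‖ ≤ (1 + (l.map fun c : ℂ => ‖c‖).sum) ^ m := by
  intro l
  induction l with
  | nil =>
    refine ⟨fun m => if m = 0 then 1 else 0, ?_, ?_⟩
    · simp [ite_smul, Finset.sum_ite_eq']
    · intro m
      by_cases h : m = 0 <;> simp [h]
  | cons c l ih =>
    obtain ⟨a, hprod, hbound⟩ := ih
    set S := (l.map fun c : ℂ => ‖c‖).sum with hS
    have hS0 : 0 ≤ S := by
      apply List.sum_nonneg
      intro x hx
      obtain ⟨y, _, rfl⟩ := List.mem_map.mp hx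
      exact norm_nonneg _
    refine ⟨fun m => a m + c * (if m = 0 then 0 else a (m - 1)), ?_, ?_⟩
    · rw [List.map_cons, List.prod_cons, hprod]
      have h2 : (c • N) * ∑ m ∈ Finset.range (ν + 1), a m • N ^ m
          = ∑ m ∈ Finset.range (ν + 1), (c * a m) • N ^ (m + 1) := by
        rw [Finset.mul_sum]
        refine Finset.sum_congr rfl fun m _ => ?_
        rw [smul_mul_assoc, mul_smul_comm, smul_smul, pow_succ']
      have h3 : ∑ m ∈ Finset.range (ν + 1), (c * a m) • N ^ (m + 1)
          = ∑ m ∈ Finset.range (ν + 1), (c * (if m = 0 then 0 else a (m - 1))) • N ^ m := by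
        rw [Finset.sum_range_succ (fun m => (c * a m) • N ^ (m + 1)) ν, hN, smul_zero, add_zero,
            Finset.sum_range_succ' (fun m => (c * (if m = 0 then 0 else a (m - 1))) • N ^ m) ν]
        simp
      rw [add_mul, one_mul, h2, h3, ← Finset.sum_add_distrib]
      exact Finset.sum_congr rfl fun m _ => (add_smul _ _ _).symm
    · intro m
      have habs : ((c :: l).map fun c : ℂ => ‖c‖).sum = ‖c‖ + S := by simp [hS]
      rw [habs]
      have hc : 0 ≤ ‖c‖ := norm_nonneg _
      match m with
      | 0 => simpa using hbound 0
      | Nat.succ k =>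
        have h1 := hbound (k + 1)
        have h2 := hbound k
        have hp : (1 + S) ^ k ≤ (1 + (‖c‖ + S)) ^ k :=
          pow_le_pow_left₀ (by linarith) (by linarith) k
        simp only [Nat.succ_ne_zero, if_false, Nat.succ_sub_one]
        calc ‖a (k + 1) + c * a k‖
            ≤ ‖a (k + 1)‖ + ‖c‖ * ‖a k‖ := by
              refine (norm_add_le _ _).trans ?_
              rw [norm_mul]
          _ ≤ (1 + S) ^ (k + 1) + ‖c‖ * (1 + S) ^ k := by
              have := mul_le_mul_of_nonneg_left h2 hc
              linarith
          _ = (1 + S) ^ k * (1 + S + ‖c‖) := by ring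
          _ ≤ (1 + (‖c‖ + S)) ^ k * (1 + (‖c‖ + S)) := by
              apply mul_le_mul hp (by linarith) (by linarith) (by positivity)
          _ = (1 + (‖c‖ + S)) ^ (k + 1) := by ring

lemma aux_sum_inv_le_log : ∀ (n i : ℕ), 1 ≤ i →
    ((List.range' i n).map (fun k : ℕ => ((k : ℝ))⁻¹)).sum
      ≤ 2 * (Real.log (i + n) - Real.log i) := by
  intro n
  induction n with
  | zero => intro i hi; simp
  | succ n ih =>
    intro i hi
    rw [List.range'_concat, List.map_append, List.sum_append]
    simp only [List.map_cons, List.map_nil, List.sum_cons, List.sum_nil, add_zero, one_mul]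
    have hx : (1 : ℝ) ≤ (i : ℝ) + n := by
      have : (1 : ℝ) ≤ (i : ℝ) := by exact_mod_cast hi
      have : (0 : ℝ) ≤ (n : ℝ) := Nat.cast_nonneg n
      linarith
    set x : ℝ := (i : ℝ) + n with hxdef
    have key : ((i + n : ℕ) : ℝ)⁻¹ ≤ 2 * (Real.log (x + 1) - Real.log x) := by
      have hcast : ((i + n : ℕ) : ℝ) = x := by push_cast; ring
      rw [hcast]
      have h := Real.log_le_sub_one_of_pos (show (0 : ℝ) < x / (x + 1) by positivity)
      rw [Real.log_div (by linarith) (by linarith)] at h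
      have h2 : x / (x + 1) - 1 = -(1 / (x + 1)) := by field_simp; ring
      have h3 : x⁻¹ ≤ 2 / (x + 1) := by
        rw [inv_eq_one_div, div_le_div_iff₀ (by linarith) (by linarith)]
        linarith
      have h4 : 1 / (x + 1) ≤ Real.log (x + 1) - Real.log x := by linarith
      calc x⁻¹ ≤ 2 / (x + 1) := h3
        _ = 2 * (1 / (x + 1)) := by ring
        _ ≤ 2 * (Real.log (x + 1) - Real.log x) := by linarith
    have hcast2 : ((i : ℝ) + (n + 1 : ℕ)) = x + 1 := by push_cast; ring
    have := ih i hi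
    have hgoalcast : (↑i + ↑(n + 1) : ℝ) = x + 1 := by push_cast; ring
    rw [hgoalcast]
    linarith

set_option maxHeartbeats 1000000 in
set_option synthInstance.maxHeartbeats 1000000 in
/-- Let N be a nilpotent q×q complex matrix with N^{ν+1} = 0 (ν ≥ 0 an
integer), λ ∈ ℂ, w₀ > 0, b > 0, w_k := w₀ + kb. There is a constant `C` (depending on
N, ν, λ, b, w₀ but not on i, j) such that for all integers 1 ≤ i ≤ j with w_i ≥ 2|λ|:
‖∏_{k=i}^{j−1} (I + (w_k + λ)⁻¹ N)‖ ≤ C (1 + log(j/i))^ν.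
(The factors commute, so the product may be taken in any order; here it is taken with
increasing k from left to right.) -/
theorem opNorm_prod_one_add_nilpotent_le (q : ℕ) (N : Matrix (Fin q) (Fin q) ℂ) (ν : ℕ)
    (hN : N ^ (ν + 1) = 0) (lam : ℂ) (w₀ b : ℝ) (hw₀ : 0 < w₀) (hb : 0 < b) :
    ∃ C : ℝ, ∀ i j : ℕ, 1 ≤ i → i ≤ j → 2 * ‖lam‖ ≤ w₀ + (i : ℝ) * b →
      opNorm (((List.range' i (j - i)).map fun k =>
          (1 : Matrix (Fin q) (Fin q) ℂ) + (((w₀ + (k : ℝ) * b : ℝ) : ℂ) + lam)⁻¹ • N).prod)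
        ≤ C * (1 + Real.log ((j : ℝ) / (i : ℝ))) ^ ν := by
  set T : ℝ := ∑ m ∈ Finset.range (ν + 1), opNorm (N ^ m) with hT
  have hT0 : 0 ≤ T := Finset.sum_nonneg fun m _ => norm_nonneg _
  refine ⟨(1 + 4 / b) ^ ν * T, ?_⟩
  intro i j hi hij hlam
  set cf : ℕ → ℂ := fun k => (((w₀ + (k : ℝ) * b : ℝ) : ℂ) + lam)⁻¹ with hcf
  set l : List ℕ := List.range' i (j - i) with hl
  obtain ⟨a, hprod, hbound⟩ := aux_prod_one_add_smul N hN (l.map cf)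
  have hmm : (l.map fun k =>
      (1 : Matrix (Fin q) (Fin q) ℂ) + (((w₀ + (k : ℝ) * b : ℝ) : ℂ) + lam)⁻¹ • N)
      = ((l.map cf).map fun c => (1 : Matrix (Fin q) (Fin q) ℂ) + c • N) := by
    simp only [bind_pure_comp, List.map_eq_map, List.map_map]
    rfl
  rw [hmm, hprod]
  -- bound on the scalar sum S
  set S : ℝ := ((l.map cf).map fun c : ℂ => ‖c‖).sum with hSdef
  have hS0 : 0 ≤ S := List.sum_nonneg (by
    intro x hx
    obtain ⟨y, _, rfl⟩ := List.mem_map.mp hx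
    exact norm_nonneg _)
  -- pointwise bound on |cf k|
  have hpt : ∀ k ∈ l, ‖cf k‖ ≤ (2 / b) * ((k : ℝ))⁻¹ := by
    intro k hk
    have hkmem := List.mem_range'_1.mp hk
    have hik : i ≤ k := hkmem.1
    have hk1 : 1 ≤ k := le_trans hi hik
    have hkpos : (0 : ℝ) < k := by exact_mod_cast hk1
    have hwk : (0 : ℝ) < w₀ + (k : ℝ) * b := by positivity
    have hwik : w₀ + (i : ℝ) * b ≤ w₀ + (k : ℝ) * b := by
      have : (i : ℝ) ≤ (k : ℝ) := by exact_mod_cast hik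
      nlinarith
    have hlam2 : ‖lam‖ ≤ (w₀ + (k : ℝ) * b) / 2 := by linarith
    have hlow : (w₀ + (k : ℝ) * b) / 2 ≤ ‖((w₀ + (k : ℝ) * b : ℝ) : ℂ) + lam‖ := by
      have h1 := norm_add_le ((((w₀ + (k : ℝ) * b : ℝ) : ℂ)) + lam) (-lam)
      simp only [add_neg_cancel_right, norm_neg] at h1
      have h2 : ‖(((w₀ + (k : ℝ) * b : ℝ) : ℂ))‖ = w₀ + (k : ℝ) * b := by
        rw [Complex.norm_real, Real.norm_eq_abs, abs_of_pos hwk]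
      rw [h2] at h1
      linarith
    have habs : ‖cf k‖ = (‖((w₀ + (k : ℝ) * b : ℝ) : ℂ) + lam‖)⁻¹ := by
      rw [hcf]; simp [norm_inv]
    rw [habs]
    have hpos2 : (0 : ℝ) < (w₀ + (k : ℝ) * b) / 2 := by linarith
    have hstep1 : (‖((w₀ + (k : ℝ) * b : ℝ) : ℂ) + lam‖)⁻¹
        ≤ ((w₀ + (k : ℝ) * b) / 2)⁻¹ := by
      exact inv_anti₀ hpos2 hlow
    refine hstep1.trans ?_
    have hkb : (k : ℝ) * b ≤ w₀ + (k : ℝ) * b := by linarith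
    rw [inv_div, div_le_iff₀ hwk]
    have : (2 / b) * ((k : ℝ))⁻¹ * ((k : ℝ) * b) = 2 := by
      field_simp
    nlinarith [mul_le_mul_of_nonneg_left hkb (by positivity : (0:ℝ) ≤ (2 / b) * ((k : ℝ))⁻¹),
      this]
  have hsum1 : S ≤ (2 / b) * ((l.map (fun k : ℕ => ((k : ℝ))⁻¹)).sum) := by
    rw [hSdef, List.map_map]
    calc (l.map ((fun c : ℂ => ‖c‖) ∘ cf)).sum
        ≤ (l.map (fun k : ℕ => (2 / b) * ((k : ℝ))⁻¹)).sum := by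
          apply List.sum_le_sum
          intro k hk
          exact hpt k hk
      _ = (2 / b) * ((l.map (fun k : ℕ => ((k : ℝ))⁻¹)).sum) := by
          rw [← List.sum_map_mul_left]
  have hlog : ((l.map (fun k : ℕ => ((k : ℝ))⁻¹)).sum) ≤ 2 * Real.log ((j : ℝ) / (i : ℝ)) := by
    have h := aux_sum_inv_le_log (j - i) i hi
    have hcast : ((i : ℝ) + ((j - i : ℕ) : ℝ)) = (j : ℝ) := by
      have : i + (j - i) = j := Nat.add_sub_cancel' hij
      exact_mod_cast congrArg (Nat.cast : ℕ → ℝ) this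
    rw [hcast] at h
    have hipos : (0 : ℝ) < (i : ℝ) := by exact_mod_cast hi
    have hjpos : (0 : ℝ) < (j : ℝ) := by exact_mod_cast lt_of_lt_of_le (by exact_mod_cast hi) (by exact_mod_cast hij)
    rw [Real.log_div (ne_of_gt hjpos) (ne_of_gt hipos)]
    exact h
  set L : ℝ := Real.log ((j : ℝ) / (i : ℝ)) with hLdef
  have hL0 : 0 ≤ L := by
    apply Real.log_nonneg
    rw [le_div_iff₀ (by exact_mod_cast hi : (0:ℝ) < (i:ℝ))]
    simp only [one_mul]
    exact_mod_cast hij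
  have hSL : S ≤ (4 / b) * L := by
    have := hsum1.trans (by
      have hb2 : 0 ≤ 2 / b := by positivity
      exact mul_le_mul_of_nonneg_left hlog hb2)
    calc S ≤ (2 / b) * (2 * L) := this
      _ = (4 / b) * L := by ring
  -- norm bound
  have hnorm : opNorm (∑ m ∈ Finset.range (ν + 1), a m • N ^ m)
      ≤ ∑ m ∈ Finset.range (ν + 1), ‖a m‖ * opNorm (N ^ m) := by
    unfold opNorm
    rw [map_sum]
    refine (norm_sum_le _ _).trans ?_
    refine Finset.sum_le_sum fun m _ => ?_
    rw [map_smul]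
    refine (norm_smul_le (a m) (Matrix.toEuclideanCLM (𝕜 := ℂ) (N ^ m))).trans ?_
    simp
  have hstep : ∑ m ∈ Finset.range (ν + 1), ‖a m‖ * opNorm (N ^ m)
      ≤ (1 + S) ^ ν * T := by
    rw [hT, Finset.mul_sum]
    refine Finset.sum_le_sum fun m hm => ?_
    have hm' : m ≤ ν := Nat.lt_succ_iff.mp (Finset.mem_range.mp hm)
    have h1 : ‖a m‖ ≤ (1 + S) ^ m := hbound m
    have h2 : (1 + S) ^ m ≤ (1 + S) ^ ν := pow_le_pow_right₀ (by linarith) hm'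
    exact mul_le_mul (h1.trans h2) le_rfl (norm_nonneg _) (by positivity)
  have hfinal : (1 + S) ^ ν ≤ (1 + 4 / b) ^ ν * (1 + L) ^ ν := by
    rw [← mul_pow]
    apply pow_le_pow_left₀ (by linarith)
    have hbpos : 0 ≤ 4 / b := by positivity
    nlinarith
  calc opNorm (∑ m ∈ Finset.range (ν + 1), a m • N ^ m)
      ≤ (1 + S) ^ ν * T := hnorm.trans hstep
    _ ≤ ((1 + 4 / b) ^ ν * (1 + L) ^ ν) * T :=
        mul_le_mul_of_nonneg_right hfinal hT0
    _ = (1 + 4 / b) ^ ν * T * (1 + L) ^ ν := by ring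
end
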